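/- Let R be a commutative ring and M an R-module. Write N = M × M, and let e₁, e₂, s : N → N be the R-linear maps e₁(x₁,x₂) = (x₁,0), e₂(x₁,x₂) = (0,x₂), s(x₁,x₂) = (x₂,x₁). Let ψ : N × N → R be an alternating R-bilinear form satisfying ψ(e₁ x, y) = ψ(x, e₂ y) and ψ(s x, y) = −ψ(x, s y) for all x, y ∈ N. Then there exists a unique R-bilinear form φ : M × M → R such that ψ((x₁,x₂),(y₁,y₂)) = φ(x₂,y₁) − φ(x₁,y₂) for all x₁, x₂, y₁, y₂ ∈ M; moreover this φ is symmetric, and if ψ is nondegenerate then φ is nondegenerate. -/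

import Mathlib

/-- Morita-type reduction of an alternating form on `N = M × M`
with `e₁/e₂/s`-compatibilities to a symmetric form `φ` on `M`. -/
theorem stmt_0 {R M : Type*} [CommRing R] [AddCommGroup M] [Module R M]
    (ψ : (M × M) →ₗ[R] (M × M) →ₗ[R] R)
    (halt : ∀ x : M × M, ψ x x = 0)
    (he : ∀ x y : M × M, ψ (x.1, 0) y = ψ x (0, y.2))
    (hs : ∀ x y : M × M, ψ (x.2, x.1) y = - ψ x (y.2, y.1)) :
    (∃! φ : M →ₗ[R] M →ₗ[R] R,
        ∀ x₁ x₂ y₁ y₂ : M, ψ (x₁, x₂) (y₁, y₂) = φ x₂ y₁ - φ x₁ y₂) ∧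
      ∀ φ : M →ₗ[R] M →ₗ[R] R,
        (∀ x₁ x₂ y₁ y₂ : M, ψ (x₁, x₂) (y₁, y₂) = φ x₂ y₁ - φ x₁ y₂) →
          (∀ a b : M, φ a b = φ b a) ∧
            (((∀ x : M × M, (∀ y, ψ x y = 0) → x = 0) ∧
                (∀ y : M × M, (∀ x, ψ x y = 0) → y = 0)) →
              ((∀ a : M, (∀ b, φ a b = 0) → a = 0) ∧
                (∀ b : M, (∀ a, φ a b = 0) → b = 0))) := by
  -- skew-symmetry
  have skew : ∀ x y : M × M, ψ x y = - ψ y x := by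
    intro x y
    have h := halt (x + y)
    simp only [map_add, LinearMap.add_apply, halt x, halt y, zero_add, add_zero] at h
    linear_combination h
  have h11 : ∀ a b : M, ψ (a, 0) (b, 0) = 0 := by
    intro a b
    have := he (a, 0) (b, 0)
    simpa [Prod.mk_zero_zero] using this
  have h22 : ∀ a b : M, ψ (0, a) (0, b) = 0 := by
    intro a b
    have := he (0, a) (0, b)
    simpa [Prod.mk_zero_zero] using this.symm
  have hmix : ∀ a b : M, ψ (0, a) (b, 0) = - ψ (a, 0) (0, b) := by
    intro a b
    have := hs (a, 0) (b, 0)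
    simpa using this
  set φ : M →ₗ[R] M →ₗ[R] R :=
    (ψ.comp (LinearMap.inr R M M)).compl₂ (LinearMap.inl R M M) with hφdef
  have hφ : ∀ a b : M, φ a b = ψ (0, a) (b, 0) := by
    intro a b; simp [hφdef, LinearMap.compl₂_apply]
  have hφsymm : ∀ a b : M, φ a b = φ b a := by
    intro a b
    rw [hφ, hφ, skew (0, a) (b, 0), hmix b a]
  have key : ∀ x₁ x₂ y₁ y₂ : M, ψ (x₁, x₂) (y₁, y₂) = φ x₂ y₁ - φ x₁ y₂ := by
    intro x₁ x₂ y₁ y₂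
    have hx : ((x₁, x₂) : M × M) = (x₁, 0) + (0, x₂) := by simp
    have hy : ((y₁, y₂) : M × M) = (y₁, 0) + (0, y₂) := by simp
    rw [hx, hy]
    simp only [map_add, LinearMap.add_apply, h11, h22, hφ, zero_add, add_zero]
    linear_combination hmix x₁ y₂
  have agree : ∀ φ' : M →ₗ[R] M →ₗ[R] R,
      (∀ x₁ x₂ y₁ y₂ : M, ψ (x₁, x₂) (y₁, y₂) = φ' x₂ y₁ - φ' x₁ y₂) →
      ∀ a b : M, φ' a b = φ a b := by
    intro φ' hφ' a b
    have h1 := hφ' 0 a b 0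
    have h2 := key 0 a b 0
    simp only [map_zero, LinearMap.zero_apply, sub_zero] at h1 h2
    rw [← h1, h2]
  refine ⟨⟨φ, key, fun φ' hφ' => ?_⟩, ?_⟩
  · ext a b
    exact agree φ' hφ' a b
  · intro φ' hφ'
    have hag := agree φ' hφ'
    refine ⟨fun a b => by rw [hag, hφsymm, ← hag], fun ⟨hl, hr⟩ => ⟨?_, ?_⟩⟩
    · intro a ha
      have h0 : ((0 : M), a) = 0 := by
        refine hl ((0 : M), a) fun y => ?_
        rw [show y = (y.1, y.2) from rfl, hφ' 0 a y.1 y.2, ha]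
        simp
      simpa [Prod.ext_iff] using h0
    · intro b hb
      have h0 : ((b : M), (0 : M)) = 0 := by
        refine hr (b, (0 : M)) fun x => ?_
        rw [show x = (x.1, x.2) from rfl, hφ' x.1 x.2 b 0, hb]
        simp
      simpa [Prod.ext_iff] using h0
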